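/- If G is a connected simple r-regular graph containing r+1 pairwise edge-disjoint maximum matchings, then r is even and G is the complete graph on r+1 vertices. -/

import Mathlib

set_option linter.unusedSectionVars false
set_option maxHeartbeats 1000000

/-- A matching of a simple graph, as a finite set of edges of `G` no two of which share
an endpoint. -/
def SimpleGraph.IsFinsetMatching {V : Type} (G : SimpleGraph V) (M : Finset (Sym2 V)) : Prop :=
  (↑M : Set (Sym2 V)) ⊆ G.edgeSet ∧
    ∀ e ∈ M, ∀ f ∈ M, e ≠ f → ∀ v : V, v ∈ e → v ∉ f

/-- A maximum matching of a simple graph. -/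
def SimpleGraph.IsFinsetMaximumMatching {V : Type} (G : SimpleGraph V)
    (M : Finset (Sym2 V)) : Prop :=
  G.IsFinsetMatching M ∧ ∀ M' : Finset (Sym2 V), G.IsFinsetMatching M' → M'.card ≤ M.card

open Finset

namespace MatchAux

variable {V : Type} [Fintype V] [DecidableEq V] {G : SimpleGraph V}

open Classical in
/-- The finset of vertices covered by a set of edges. -/
noncomputable def covered (M : Finset (Sym2 V)) : Finset V :=
  univ.filter (fun v => ∃ e ∈ M, v ∈ e)

lemma mem_covered {M : Finset (Sym2 V)} {v : V} : v ∈ covered M ↔ ∃ e ∈ M, v ∈ e := by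
  classical
  simp [covered]

lemma matching_subset {M N : Finset (Sym2 V)} (hM : G.IsFinsetMatching M) (h : N ⊆ M) :
    G.IsFinsetMatching N :=
  ⟨fun e he => hM.1 (h (by exact_mod_cast he)), fun e he f hf => hM.2 e (h he) f (h hf)⟩

/-- cardinality of the covered set of a matching -/
lemma card_covered {M : Finset (Sym2 V)} (hM : G.IsFinsetMatching M) :
    (covered M).card = 2 * M.card := by
  classical
  have hcov : covered M = M.biUnion (fun e => univ.filter (· ∈ e)) := by
    ext v
    simp [mem_covered, Finset.mem_biUnion]
  rw [hcov, Finset.card_biUnion]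
  · rw [Finset.sum_congr rfl (fun e he => ?_), Finset.sum_const, smul_eq_mul, mul_comm]
    induction e with
    | h a b =>
      have hab : a ≠ b := by
        intro hab
        exact G.not_isDiag_of_mem_edgeSet (hM.1 he) (by rw [hab]; exact Sym2.mk_isDiag_iff.mpr rfl)
      have : univ.filter (· ∈ s(a,b)) = {a, b} := by
        ext v; simp [Sym2.mem_iff]
      rw [this, Finset.card_insert_of_notMem (by simpa using hab), Finset.card_singleton]
  · intro e he f hf hef
    simp only [Function.onFun]
    rw [Finset.disjoint_filter]
    intro v _ hve hvf
    exact hM.2 e he f hf hef v hve hvf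

/-- the unique edge of a matching through a covered vertex -/
lemma edge_unique {M : Finset (Sym2 V)} (hM : G.IsFinsetMatching M) {v : V} {e f : Sym2 V}
    (he : e ∈ M) (hf : f ∈ M) (hve : v ∈ e) (hvf : v ∈ f) : e = f := by
  by_contra h
  exact hM.2 e he f hf h v hve hvf

open Classical in
noncomputable def partner (M : Finset (Sym2 V)) (v : V) : V :=
  if h : ∃ e, e ∈ M ∧ v ∈ e then Sym2.Mem.other' h.choose_spec.2 else v

lemma partner_edge_mem {M : Finset (Sym2 V)} {v : V} (h : v ∈ covered M) :
    s(v, partner M v) ∈ M := by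
  rw [mem_covered] at h
  have h' : ∃ e, e ∈ M ∧ v ∈ e := by simpa [exists_prop] using h
  rw [partner, dif_pos h']
  rw [Sym2.other_spec' h'.choose_spec.2]
  exact h'.choose_spec.1

/-- a maximum matching cannot expose two adjacent vertices -/
lemma not_adj_exposed {M : Finset (Sym2 V)} (hM : G.IsFinsetMaximumMatching M) {u v : V}
    (huv : G.Adj u v) (hu : u ∉ covered M) (hv : v ∉ covered M) : False := by
  have hne : s(u,v) ∉ M := fun h => hu (mem_covered.mpr ⟨_, h, Sym2.mem_mk_left _ _⟩)
  have hM' : G.IsFinsetMatching (insert s(u,v) M) := by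
    constructor
    · intro e he
      rcases Finset.mem_insert.mp (by exact_mod_cast he) with h | h
      · rw [h]; exact (SimpleGraph.mem_edgeSet G).mpr huv
      · exact hM.1.1 (by exact_mod_cast h)
    · intro e he f hf hef w hwe hwf
      rcases Finset.mem_insert.mp he with h1 | h1 <;> rcases Finset.mem_insert.mp hf with h2 | h2
      · exact hef (h1.trans h2.symm)
      · subst h1
        rcases Sym2.mem_iff.mp hwe with rfl | rfl
        · exact hu (mem_covered.mpr ⟨f, h2, hwf⟩)
        · exact hv (mem_covered.mpr ⟨f, h2, hwf⟩)
      · subst h2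
        rcases Sym2.mem_iff.mp hwf with rfl | rfl
        · exact hu (mem_covered.mpr ⟨e, h1, hwe⟩)
        · exact hv (mem_covered.mpr ⟨e, h1, hwe⟩)
      · exact hM.1.2 e h1 f h2 hef w hwe hwf
  have := hM.2 _ hM'
  rw [Finset.card_insert_of_notMem hne] at this
  omega

/-- every vertex is exposed by at least one of r+1 pairwise disjoint matchings in an
r-regular graph -/
lemma exists_exposed [DecidableRel G.Adj] {r : ℕ} (hreg : G.IsRegularOfDegree r)
    (F : Fin (r + 1) → Finset (Sym2 V)) (hm : ∀ i, G.IsFinsetMatching (F i))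
    (hdisj : ∀ i j, i ≠ j → Disjoint (F i) (F j)) (v : V) :
    ∃ i, v ∉ covered (F i) := by
  by_contra h
  push_neg at h
  have hinj : ∀ i : Fin (r+1), s(v, partner (F i) v) ∈ G.incidenceFinset v := by
    intro i
    rw [SimpleGraph.mem_incidenceFinset]
    exact ⟨(hm i).1 (partner_edge_mem (h i)), Sym2.mem_mk_left _ _⟩
  have hcard : (univ : Finset (Fin (r+1))).card ≤ (G.incidenceFinset v).card := by
    apply Finset.card_le_card_of_injOn (fun i => s(v, partner (F i) v))
      (fun i _ => hinj i)
    intro i _ j _ hij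
    simp only at hij
    by_contra hne
    have h1 := partner_edge_mem (h i)
    have h2 := partner_edge_mem (h j)
    rw [hij] at h1
    exact Finset.disjoint_left.mp (hdisj i j hne) h1 h2
  rw [SimpleGraph.card_incidenceFinset_eq_degree, hreg v] at hcard
  simp at hcard

section Switch

variable {f g : Finset (Sym2 V)} {P : Finset V}

open Classical in
/-- the edges of `M` lying inside `P` -/
noncomputable def inside (M : Finset (Sym2 V)) (P : Finset V) : Finset (Sym2 V) :=
  M.filter (fun e => ∀ x ∈ e, x ∈ P)

lemma mem_inside {M : Finset (Sym2 V)} {e : Sym2 V} :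
    e ∈ inside M P ↔ e ∈ M ∧ ∀ x ∈ e, x ∈ P := by
  classical
  simp [inside]

/-- `P` is closed for matching `M` -/
def Closed (M : Finset (Sym2 V)) (P : Finset V) : Prop :=
  ∀ e ∈ M, ∀ x ∈ e, x ∈ P → ∀ y ∈ e, y ∈ P

/-- switching a pair of matchings along a closed set -/
noncomputable def switch (f g : Finset (Sym2 V)) (P : Finset V) : Finset (Sym2 V) :=
  (f \ inside f P) ∪ inside g P

lemma switch_matching (hf : G.IsFinsetMatching f) (hg : G.IsFinsetMatching g)
    (hfc : Closed f P) : G.IsFinsetMatching (switch f g P) := by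
  constructor
  · intro e he
    rcases Finset.mem_union.mp (by exact_mod_cast he) with h | h
    · exact hf.1 (by exact_mod_cast (Finset.mem_sdiff.mp h).1)
    · exact hg.1 (by exact_mod_cast (mem_inside.mp h).1)
  · intro e he e' he' hee' w hwe hwe'
    rcases Finset.mem_union.mp he with h | h <;> rcases Finset.mem_union.mp he' with h' | h'
    · exact hf.2 e (Finset.mem_sdiff.mp h).1 e' (Finset.mem_sdiff.mp h').1 hee' w hwe hwe'
    · have hwP : w ∈ P := (mem_inside.mp h').2 w hwe'
      have : ∀ y ∈ e, y ∈ P := hfc e (Finset.mem_sdiff.mp h).1 w hwe hwP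
      exact absurd (mem_inside.mpr ⟨(Finset.mem_sdiff.mp h).1, this⟩) (Finset.mem_sdiff.mp h).2
    · have hwP : w ∈ P := (mem_inside.mp h).2 w hwe
      have : ∀ y ∈ e', y ∈ P := hfc e' (Finset.mem_sdiff.mp h').1 w hwe' hwP
      exact absurd (mem_inside.mpr ⟨(Finset.mem_sdiff.mp h').1, this⟩) (Finset.mem_sdiff.mp h').2
    · exact hg.2 e (mem_inside.mp h).1 e' (mem_inside.mp h').1 hee' w hwe hwe'

lemma switch_card (hfc : Closed f P) :
    (switch f g P).card = f.card - (inside f P).card + (inside g P).card := by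
  have hsub : inside f P ⊆ f := fun e he => (mem_inside.mp he).1
  rw [switch, Finset.card_union_of_disjoint, Finset.card_sdiff_of_subset hsub]
  rw [Finset.disjoint_left]
  intro e he hei
  exact (Finset.mem_sdiff.mp he).2 (mem_inside.mpr ⟨(Finset.mem_sdiff.mp he).1,
    (mem_inside.mp hei).2⟩)

/-- coverage description of the switch -/
lemma covered_switch (hfc : Closed f P) (hgc : Closed g P) {w : V} :
    (w ∈ covered (switch f g P)) ↔
      ((w ∈ P ∧ w ∈ covered g) ∨ (w ∉ P ∧ w ∈ covered f)) := by
  constructor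
  · intro hw
    obtain ⟨e, he, hwe⟩ := mem_covered.mp hw
    rcases Finset.mem_union.mp he with h | h
    · right
      refine ⟨fun hwP => ?_, mem_covered.mpr ⟨e, (Finset.mem_sdiff.mp h).1, hwe⟩⟩
      have : ∀ y ∈ e, y ∈ P := hfc e (Finset.mem_sdiff.mp h).1 w hwe hwP
      exact (Finset.mem_sdiff.mp h).2 (mem_inside.mpr ⟨(Finset.mem_sdiff.mp h).1, this⟩)
    · exact Or.inl ⟨(mem_inside.mp h).2 w hwe, mem_covered.mpr ⟨e, (mem_inside.mp h).1, hwe⟩⟩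
  · rintro (⟨hwP, hwg⟩ | ⟨hwP, hwf⟩)
    · obtain ⟨e, he, hwe⟩ := mem_covered.mp hwg
      have : e ∈ inside g P := mem_inside.mpr ⟨he, hgc e he w hwe hwP⟩
      exact mem_covered.mpr ⟨e, Finset.mem_union_right _ this, hwe⟩
    · obtain ⟨e, he, hwe⟩ := mem_covered.mp hwf
      have hni : e ∉ inside f P := fun hi => hwP ((mem_inside.mp hi).2 w hwe)
      exact mem_covered.mpr ⟨e, Finset.mem_union_left _ (Finset.mem_sdiff.mpr ⟨he, hni⟩), hwe⟩

end Switch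

/-- A connected component of any graph has at least `|P| - 1` edges within it. -/
lemma comp_bound (A : SimpleGraph V) (u : V) (P : Finset V)
    (hP : ∀ w, w ∈ P ↔ A.Reachable u w) (T : Finset (Sym2 V))
    (hT : ∀ v w, A.Adj v w → v ∈ P → s(v, w) ∈ T) :
    P.card ≤ T.card + 1 := by
  classical
  have hu : u ∈ P := (hP u).mpr (SimpleGraph.Reachable.refl u)
  have hstep : ∀ v ∈ P.erase u, ∃ w, A.Adj v w ∧ A.dist w u < A.dist v u := by
    intro v hv
    have hvu : v ≠ u := (Finset.mem_erase.mp hv).1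
    have hr : A.Reachable v u := ((hP v).mp (Finset.mem_erase.mp hv).2).symm
    have hpos : 0 < A.dist v u := hr.pos_dist_of_ne hvu
    obtain ⟨p, hp⟩ := hr.exists_walk_length_eq_dist
    cases p with
    | nil => simp at hpos
    | cons hadj q =>
      refine ⟨_, hadj, ?_⟩
      have : A.dist _ u ≤ q.length := SimpleGraph.dist_le q
      simp [SimpleGraph.Walk.length_cons] at hp
      omega
  set φ : V → Sym2 V := fun v =>
    if h : ∃ w, A.Adj v w ∧ A.dist w u < A.dist v u then s(v, h.choose) else s(v, v) with hφ
  have hmaps : ∀ v ∈ P.erase u, φ v ∈ T := by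
    intro v hv
    have h := hstep v hv
    rw [hφ]
    simp only [dif_pos h]
    exact hT v h.choose h.choose_spec.1 (Finset.mem_erase.mp hv).2
  have hinj : Set.InjOn φ (P.erase u) := by
    intro v hv v' hv' heq
    by_contra hne
    have h := hstep v (by exact_mod_cast hv)
    have h' := hstep v' (by exact_mod_cast hv')
    rw [hφ] at heq
    simp only [dif_pos h, dif_pos h'] at heq
    rcases Sym2.eq_iff.mp heq with ⟨h1, h2⟩ | ⟨h1, h2⟩
    · exact hne h1
    · have ha := h.choose_spec.2
      have hb := h'.choose_spec.2
      rw [h2] at ha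
      rw [← h1] at hb
      omega
  have := Finset.card_le_card_of_injOn φ hmaps hinj
  rw [Finset.card_erase_of_mem hu] at this
  omega

lemma closed_comp {f g : Finset (Sym2 V)} (hf : G.IsFinsetMatching f)
    {u : V} (P : Finset V)
    (hP : ∀ w, w ∈ P ↔ (SimpleGraph.fromEdgeSet (↑(f ∪ g) : Set (Sym2 V))).Reachable u w) :
    Closed f P := by
  intro e he x hx hxP y hy
  set A := SimpleGraph.fromEdgeSet (↑(f ∪ g) : Set (Sym2 V)) with hA
  induction e with
  | h a b =>
    have hab : a ≠ b := by
      intro h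
      exact G.not_isDiag_of_mem_edgeSet (hf.1 he) (by rw [h]; exact Sym2.mk_isDiag_iff.mpr rfl)
    have hadj : A.Adj a b := by
      rw [hA, SimpleGraph.fromEdgeSet_adj]
      exact ⟨by simpa using Or.inl he, hab⟩
    have haP : a ∈ P ∧ b ∈ P := by
      rcases Sym2.mem_iff.mp hx with rfl | rfl
      · exact ⟨hxP, (hP b).mpr (((hP x).mp hxP).trans hadj.reachable)⟩
      · exact ⟨(hP a).mpr (((hP x).mp hxP).trans hadj.symm.reachable), hxP⟩
    rcases Sym2.mem_iff.mp hy with rfl | rfl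
    · exact haP.1
    · exact haP.2

lemma filter_covered_eq {f : Finset (Sym2 V)} (hf : G.IsFinsetMatching f) {P : Finset V}
    (hfc : Closed f P) :
    P.filter (fun w => w ∈ covered f) = covered (inside f P) := by
  classical
  ext w
  simp only [Finset.mem_filter, mem_covered]
  constructor
  · rintro ⟨hwP, e, he, hwe⟩
    exact ⟨e, mem_inside.mpr ⟨he, hfc e he w hwe hwP⟩, hwe⟩
  · rintro ⟨e, he, hwe⟩
    exact ⟨(mem_inside.mp he).2 w hwe, e, (mem_inside.mp he).1, hwe⟩

/-- Gallai's lemma style statement: in a connected graph in which every vertex is exposed by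
some maximum matching, no maximum matching exposes two distinct vertices. -/
lemma gallai (hconn : G.Connected)
    (havoid : ∀ v : V, ∃ M, G.IsFinsetMaximumMatching M ∧ v ∉ covered M) :
    ∀ f, G.IsFinsetMaximumMatching f → ∀ u v : V, u ∉ covered f → v ∉ covered f → u = v := by
  classical
  by_contra hcon
  push_neg at hcon
  obtain ⟨f₀, hf₀, u₀, v₀, hu₀, hv₀, hne₀⟩ := hcon
  -- the set of "bad pairs"
  set S : Finset (V × V) := (univ ×ˢ univ).filter
    (fun p => p.1 ≠ p.2 ∧ ∃ M, G.IsFinsetMaximumMatching M ∧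
      p.1 ∉ covered M ∧ p.2 ∉ covered M) with hS
  have hSne : S.Nonempty := ⟨(u₀, v₀), by
    rw [hS, Finset.mem_filter]
    exact ⟨by simp, hne₀, f₀, hf₀, hu₀, hv₀⟩⟩
  obtain ⟨⟨u, v⟩, hmemS, hmin⟩ := Finset.exists_min_image S (fun p => G.dist p.1 p.2) hSne
  rw [hS, Finset.mem_filter] at hmemS
  obtain ⟨-, huv, f, hf, hu, hv⟩ := hmemS
  -- the distance is at least 2
  have hreach : G.Reachable u v := hconn.preconnected u v
  have hd0 : 0 < G.dist u v := hreach.pos_dist_of_ne huv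
  have hd1 : G.dist u v ≠ 1 := by
    intro h1
    exact not_adj_exposed hf (SimpleGraph.dist_eq_one_iff_adj.mp h1) hu hv
  -- find t adjacent to u closer to v
  obtain ⟨p, hp⟩ := hreach.exists_walk_length_eq_dist
  obtain ⟨t, hadj_ut, hdtv⟩ : ∃ t, G.Adj u t ∧ G.dist t v < G.dist u v := by
    cases p with
    | nil => simp at hd0
    | cons hadj q =>
      refine ⟨_, hadj, ?_⟩
      have := SimpleGraph.dist_le q
      simp [SimpleGraph.Walk.length_cons] at hp
      omega
  have htf : t ∈ covered f := by
    by_contra ht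
    exact not_adj_exposed hf hadj_ut hu ht
  have htv : t ≠ v := fun h => hv (h ▸ htf)
  -- choose g, a maximum matching exposing t, maximizing agreement with f
  set gset : Finset (Finset (Sym2 V)) := univ.filter
    (fun M => G.IsFinsetMaximumMatching M ∧ t ∉ covered M) with hgset
  have hgne : gset.Nonempty := by
    obtain ⟨M, hM1, hM2⟩ := havoid t
    exact ⟨M, by rw [hgset, Finset.mem_filter]; exact ⟨Finset.mem_univ _, hM1, hM2⟩⟩
  obtain ⟨g, hgmem, hgmax⟩ := Finset.exists_max_image gset (fun M => (f ∩ M).card) hgne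
  rw [hgset, Finset.mem_filter] at hgmem
  obtain ⟨-, hg, htg⟩ := hgmem
  -- g covers u and v
  have hug : u ∈ covered g := by
    by_contra h
    exact not_adj_exposed hg hadj_ut h htg
  have hvg : v ∈ covered g := by
    by_contra h
    have : (t, v) ∈ S := by
      rw [hS, Finset.mem_filter]
      exact ⟨by simp, htv, g, hg, htg, h⟩
    have := hmin _ this
    simp only at this
    omega
  -- the component of u in the union graph
  set A := SimpleGraph.fromEdgeSet (↑(f ∪ g) : Set (Sym2 V)) with hA
  set P : Finset V := univ.filter (fun w => A.Reachable u w) with hPdef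
  have hP : ∀ w, w ∈ P ↔ A.Reachable u w := by
    intro w; rw [hPdef]; simp
  have hfc : Closed f P := closed_comp hf.1 P hP
  have hgc : Closed g P := by
    have : (↑(f ∪ g) : Set (Sym2 V)) = (↑(g ∪ f) : Set (Sym2 V)) := by
      rw [Finset.union_comm]
    exact closed_comp hg.1 P (by rw [hA] at hP; rw [this] at hP; exact hP)
  have huP : u ∈ P := (hP u).mpr (SimpleGraph.Reachable.refl u)
  -- the inside edge sets have equal cardinality, and switches are maximum matchings
  have hfgcard : f.card = g.card :=
    le_antisymm (hg.2 f hf.1) (hf.2 g hg.1)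
  have hfsub : inside f P ⊆ f := fun e he => (mem_inside.mp he).1
  have hgsub : inside g P ⊆ g := fun e he => (mem_inside.mp he).1
  have hab : (inside f P).card = (inside g P).card := by
    have h1 := hf.2 _ (switch_matching hf.1 hg.1 hfc : G.IsFinsetMatching (switch f g P))
    have h2 := hg.2 _ (switch_matching hg.1 hf.1 hgc : G.IsFinsetMatching (switch g f P))
    rw [switch_card hfc] at h1
    rw [switch_card hgc] at h2
    have hc1 := Finset.card_le_card hfsub
    have hc2 := Finset.card_le_card hgsub
    omega
  have hswitch_max : G.IsFinsetMaximumMatching (switch f g P) := by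
    refine ⟨switch_matching hf.1 hg.1 hfc, fun M' hM' => ?_⟩
    have := hf.2 M' hM'
    rw [switch_card hfc, ← hab]
    have hc1 := Finset.card_le_card hfsub
    omega
  -- counting exposed vertices inside P
  have hcount_f : (P.filter (fun w => w ∈ covered f)).card = 2 * (inside f P).card := by
    rw [filter_covered_eq hf.1 hfc]
    exact card_covered (matching_subset hf.1 hfsub)
  have hcount_g : (P.filter (fun w => w ∈ covered g)).card = 2 * (inside g P).card := by
    rw [filter_covered_eq hg.1 hgc]
    exact card_covered (matching_subset hg.1 hgsub)
  have hsplit_f := Finset.card_filter_add_card_filter_not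
    (s := P) (p := fun w => w ∈ covered f)
  have hsplit_g := Finset.card_filter_add_card_filter_not
    (s := P) (p := fun w => w ∈ covered g)
  -- the component has at least |P| - 1 edges, all inside f P or inside g P
  have hedges : P.card ≤ (inside f P).card + (inside g P).card + 1 := by
    have hbound := comp_bound A u P hP (inside f P ∪ inside g P) ?_
    · have := Finset.card_union_le (inside f P) (inside g P)
      omega
    · intro x w hxw hxP
      have hwP : w ∈ P := (hP w).mpr (((hP x).mp hxP).trans hxw.reachable)
      rw [hA, SimpleGraph.fromEdgeSet_adj] at hxw
      have hmem : s(x, w) ∈ f ∪ g := by exact_mod_cast hxw.1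
      have hall : ∀ y ∈ s(x, w), y ∈ P := by
        intro y hy
        rcases Sym2.mem_iff.mp hy with rfl | rfl
        · exact hxP
        · exact hwP
      rcases Finset.mem_union.mp hmem with h | h
      · exact Finset.mem_union_left _ (mem_inside.mpr ⟨h, hall⟩)
      · exact Finset.mem_union_right _ (mem_inside.mpr ⟨h, hall⟩)
  -- exposed sets in P are singletons
  have huPf : u ∈ P.filter (fun w => w ∉ covered f) := Finset.mem_filter.mpr ⟨huP, hu⟩
  have hcard_exp_f : (P.filter (fun w => w ∉ covered f)).card = 1 := by
    have h1 : 1 ≤ (P.filter (fun w => w ∉ covered f)).card :=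
      Finset.card_pos.mpr ⟨u, huPf⟩
    omega
  have hEf : P.filter (fun w => w ∉ covered f) = {u} := by
    obtain ⟨w, hw⟩ := Finset.card_eq_one.mp hcard_exp_f
    rw [hw] at huPf ⊢
    rw [Finset.mem_singleton.mp huPf]
  by_cases htP : t ∈ P
  · -- t in P: switch f g P exposes t and v, closer pair
    have hvP : v ∉ P := by
      intro hvP
      have : v ∈ P.filter (fun w => w ∉ covered f) := Finset.mem_filter.mpr ⟨hvP, hv⟩
      rw [hEf, Finset.mem_singleton] at this
      exact huv this.symm
    have ht_exp : t ∉ covered (switch f g P) := by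
      rw [covered_switch hfc hgc]
      rintro (⟨-, h⟩ | ⟨h, -⟩)
      · exact htg h
      · exact h htP
    have hv_exp : v ∉ covered (switch f g P) := by
      rw [covered_switch hfc hgc]
      rintro (⟨h, -⟩ | ⟨-, h⟩)
      · exact hvP h
      · exact hv h
    have : (t, v) ∈ S := by
      rw [hS, Finset.mem_filter]
      exact ⟨by simp, htv, switch f g P, hswitch_max, ht_exp, hv_exp⟩
    have := hmin _ this
    simp only at this
    omega
  · -- t not in P: switch g f P is a maximum matching exposing t with more agreement with f
    have hswitch_max' : G.IsFinsetMaximumMatching (switch g f P) := by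
      refine ⟨switch_matching hg.1 hf.1 hgc, fun M' hM' => ?_⟩
      have := hg.2 M' hM'
      rw [switch_card hgc, hab]
      have hc2 := Finset.card_le_card hgsub
      omega
    have ht_exp : t ∉ covered (switch g f P) := by
      rw [covered_switch hgc hfc]
      rintro (⟨h, -⟩ | ⟨-, h⟩)
      · exact htP h
      · exact htg h
    -- agreement increases strictly
    have hfPne : inside f P ≠ inside g P := by
      intro hEq
      have heg : s(u, partner g u) ∈ g := partner_edge_mem hug
      have : s(u, partner g u) ∈ inside g P :=
        mem_inside.mpr ⟨heg, hgc _ heg u (Sym2.mem_mk_left _ _) huP⟩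
      rw [← hEq] at this
      exact hu (mem_covered.mpr ⟨_, hfsub this, Sym2.mem_mk_left _ _⟩)
    have hstrict : (inside f P ∩ inside g P).card < (inside f P).card := by
      have hsub2 : inside f P ∩ inside g P ⊆ inside f P := Finset.inter_subset_left
      have hle := Finset.card_le_card hsub2
      rcases lt_or_eq_of_le hle with h | h
      · exact h
      · exfalso
        have h1 : inside f P ∩ inside g P = inside f P :=
          Finset.eq_of_subset_of_card_le hsub2 (le_of_eq h.symm)
        have h2 : inside f P ⊆ inside g P := by
          intro e he
          rw [← h1] at he
          exact (Finset.mem_inter.mp he).2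
        exact hfPne (Finset.eq_of_subset_of_card_le h2 (le_of_eq hab.symm))
    have hdecomp : f ∩ switch g f P =
        ((f ∩ g) \ (inside f P ∩ inside g P)) ∪ inside f P := by
      rw [switch, Finset.inter_union_distrib_left]
      congr 1
      · ext e
        simp only [Finset.mem_inter, Finset.mem_sdiff]
        constructor
        · rintro ⟨hef, heg, hegP⟩
          exact ⟨⟨hef, heg⟩, fun hmem => hegP hmem.2⟩
        · rintro ⟨⟨hef, heg⟩, hmem⟩
          refine ⟨hef, heg, fun hegP => hmem ⟨?_, hegP⟩⟩
          exact mem_inside.mpr ⟨hef, (mem_inside.mp hegP).2⟩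
      · ext e
        simp only [Finset.mem_inter]
        exact ⟨fun h => h.2, fun h => ⟨hfsub h, h⟩⟩
    have hdisj2 : Disjoint ((f ∩ g) \ (inside f P ∩ inside g P)) (inside f P) := by
      rw [Finset.disjoint_left]
      intro e he hef
      rw [Finset.mem_sdiff] at he
      refine he.2 (Finset.mem_inter.mpr ⟨hef, ?_⟩)
      exact mem_inside.mpr ⟨(Finset.mem_inter.mp he.1).2, (mem_inside.mp hef).2⟩
    have hsubint : inside f P ∩ inside g P ⊆ f ∩ g := by
      intro e he
      rw [Finset.mem_inter] at he ⊢
      exact ⟨hfsub he.1, hgsub he.2⟩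
    have hagree : (f ∩ g).card < (f ∩ switch g f P).card := by
      rw [hdecomp, Finset.card_union_of_disjoint hdisj2,
        Finset.card_sdiff_of_subset hsubint]
      have := Finset.card_le_card hsubint
      omega
    have hmem' : switch g f P ∈ gset := by
      rw [hgset, Finset.mem_filter]
      exact ⟨Finset.mem_univ _, hswitch_max', ht_exp⟩
    have := hgmax _ hmem'
    omega
end MatchAux
/-- If G is a connected simple r-regular graph containing r+1 pairwise
edge-disjoint maximum matchings, then r is even and G is the complete graph on r+1
vertices. -/
theorem even_and_complete_of_regular_with_disjoint_maximum_matchings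
    {V : Type} [Fintype V] [DecidableEq V] (G : SimpleGraph V) [DecidableRel G.Adj]
    (r : ℕ) (hconn : G.Connected) (hreg : G.IsRegularOfDegree r)
    (F : Fin (r + 1) → Finset (Sym2 V))
    (hmax : ∀ i, G.IsFinsetMaximumMatching (F i))
    (hdisj : ∀ i j, i ≠ j → Disjoint (F i) (F j)) :
    Even r ∧ G = ⊤ ∧ Fintype.card V = r + 1 := by
  classical
  have hnonempty : Nonempty V := hconn.nonempty
  set n := Fintype.card V with hn
  set ν := (F 0).card with hν
  have hFcard : ∀ i, (F i).card = ν :=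
    fun i => le_antisymm ((hmax 0).2 _ (hmax i).1) ((hmax i).2 _ (hmax 0).1)
  have havoid : ∀ v : V, ∃ M, G.IsFinsetMaximumMatching M ∧ v ∉ MatchAux.covered M := by
    intro v
    obtain ⟨i, hi⟩ := MatchAux.exists_exposed hreg F (fun i => (hmax i).1) hdisj v
    exact ⟨F i, hmax i, hi⟩
  obtain ⟨v0⟩ := hnonempty
  obtain ⟨M0, hM0, hv0⟩ := havoid v0
  have hM0card : M0.card = ν := le_antisymm ((hmax 0).2 _ hM0.1) (hM0.2 _ (hmax 0).1)
  have hgal := MatchAux.gallai hconn havoid M0 hM0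
  have hexp : (Finset.univ : Finset V) \ MatchAux.covered M0 = {v0} := by
    ext w
    simp only [Finset.mem_sdiff, Finset.mem_univ, true_and, Finset.mem_singleton]
    exact ⟨fun hw => hgal w v0 hw hv0, fun hw => hw ▸ hv0⟩
  have hcov_card : (MatchAux.covered M0).card = 2 * ν := by
    rw [MatchAux.card_covered hM0.1, hM0card]
  have hcov_sub : MatchAux.covered M0 ⊆ Finset.univ := Finset.subset_univ _
  have hsdiff : ((Finset.univ : Finset V) \ MatchAux.covered M0).card = n - 2 * ν := by
    rw [Finset.card_sdiff_of_subset hcov_sub, hcov_card, Finset.card_univ]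
  have h2ν_le : 2 * ν ≤ n := by
    have h := Finset.card_le_card hcov_sub
    rw [Finset.card_univ, hcov_card, ← hn] at h
    exact h
  have hn_eq : n = 2 * ν + 1 := by
    rw [hexp] at hsdiff
    simp at hsdiff
    omega
  -- edge counting
  have hunion_sub : (Finset.univ : Finset (Fin (r+1))).biUnion F ⊆ G.edgeFinset := by
    intro e he
    obtain ⟨i, _, hei⟩ := Finset.mem_biUnion.mp he
    rw [SimpleGraph.mem_edgeFinset]
    exact (hmax i).1.1 hei
  have hunion_card : ((Finset.univ : Finset (Fin (r+1))).biUnion F).card = (r + 1) * ν := by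
    rw [Finset.card_biUnion (fun i _ j _ hij => hdisj i j hij)]
    rw [Finset.sum_congr rfl (fun i _ => hFcard i), Finset.sum_const, Finset.card_univ,
      Fintype.card_fin, smul_eq_mul]
  have hE : (r + 1) * ν ≤ G.edgeFinset.card := by
    rw [← hunion_card]
    exact Finset.card_le_card hunion_sub
  have hsum : n * r = 2 * G.edgeFinset.card := by
    have := G.sum_degrees_eq_twice_card_edges
    rw [Finset.sum_congr rfl (fun v _ => hreg v), Finset.sum_const, Finset.card_univ,
      smul_eq_mul] at this
    exact this
  have hrn : r < n := by
    have := G.degree_lt_card_verts v0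
    rw [hreg v0] at this
    exact this
  -- 2(r+1)ν ≤ 2E = n r = (2ν+1) r  ⇒ 2ν ≤ r ; r < n = 2ν+1 ⇒ r ≤ 2ν
  have h2νr : 2 * ν ≤ r := by nlinarith
  have hr : r = 2 * ν := by omega
  have hnr : n = r + 1 := by omega
  refine ⟨⟨ν, by omega⟩, ?_, by omega⟩
  -- G = ⊤
  have hnbr : ∀ a : V, G.neighborFinset a = Finset.univ.erase a := by
    intro a
    have hsub : G.neighborFinset a ⊆ Finset.univ.erase a := by
      intro b hb
      rw [SimpleGraph.mem_neighborFinset] at hb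
      exact Finset.mem_erase.mpr ⟨hb.ne', Finset.mem_univ _⟩
    refine Finset.eq_of_subset_of_card_le hsub ?_
    rw [Finset.card_erase_of_mem (Finset.mem_univ a), Finset.card_univ,
      SimpleGraph.card_neighborFinset_eq_degree, hreg a]
    omega
  ext a b
  rw [SimpleGraph.top_adj]
  constructor
  · exact fun h => h.ne
  · intro h
    have : b ∈ G.neighborFinset a := by
      rw [hnbr a]
      exact Finset.mem_erase.mpr ⟨Ne.symm h, Finset.mem_univ _⟩
    rwa [SimpleGraph.mem_neighborFinset] at this
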